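/- Let (X,f) be a dynamical system with X a compact metric space and f : X → X continuous. Assume f admits an invariant Borel probability measure with full support. If f has the almost specification property, then the set of minimal points of f is dense in X. -/

import Mathlib

open Filter Metric Set MeasureTheory Topology

section Defs

variable {X : Type*} [MetricSpace X]

/-- The Bowen ball of radius `ε` centered at `x` along a finite set of times `Λ`. -/
def bowenBallAlong (f : X → X) (Λ : Finset ℕ) (x : X) (ε : ℝ) : Set X :=
  {y | ∀ j ∈ Λ, dist (f^[j] x) (f^[j] y) < ε}

/-- `g` is a mistake function with threshold `ε₀`. -/
structure IsMistakeFun (g : ℕ → ℝ → ℕ) (ε₀ : ℝ) : Prop where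
  pos : 0 < ε₀
  mono : ∀ n : ℕ, ∀ ε : ℝ, 0 < ε → ε ≤ ε₀ → g n ε ≤ g (n + 1) ε
  small : ∀ ε : ℝ, 0 < ε → ε ≤ ε₀ →
    Tendsto (fun n : ℕ => (g n ε : ℝ) / n) atTop (nhds 0)
  ext : ∀ n : ℕ, ∀ ε : ℝ, ε₀ < ε → g n ε = g n ε₀

/-- The `(g;n,ε)`-Bowen ball `B_n(g;x,ε)`: union of Bowen balls along all
`Λ ⊆ {0,…,n-1}` with `#Λ ≥ n - g(n,ε)`. -/
def mistakeBowenBall (f : X → X) (g : ℕ → ℝ → ℕ) (n : ℕ) (x : X) (ε : ℝ) : Set X :=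
  ⋃ Λ ∈ {Λ : Finset ℕ | Λ ⊆ Finset.range n ∧ n - g n ε ≤ Λ.card},
    bowenBallAlong f Λ x ε

/-- Almost specification property with given mistake function `g` and gap function `kg`. -/
def AlmostSpecWith (f : X → X) (g : ℕ → ℝ → ℕ) (kg : ℝ → ℕ) : Prop :=
  ∀ m : ℕ, 1 ≤ m → ∀ (ε : ℕ → ℝ) (x : ℕ → X) (nseq : ℕ → ℕ),
    (∀ j, 1 ≤ j → j ≤ m → 0 < ε j) →
    (∀ j, 1 ≤ j → j ≤ m → kg (ε j) ≤ nseq j) →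
    ∃ z : X, ∀ j, 1 ≤ j → j ≤ m →
      f^[∑ s ∈ Finset.Ico 1 j, nseq s] z ∈ mistakeBowenBall f g (nseq j) (x j) (ε j)

/-- The almost specification property. -/
def AlmostSpec (f : X → X) : Prop :=
  ∃ (g : ℕ → ℝ → ℕ) (ε₀ : ℝ) (kg : ℝ → ℕ),
    IsMistakeFun g ε₀ ∧ AlmostSpecWith f g kg

/-- `{x_n}` is a `δ`-average-pseudo-orbit of `f`. -/
def AvgPseudoOrbit (f : X → X) (δ : ℝ) (x : ℕ → X) : Prop :=
  ∃ N : ℕ, 0 < N ∧ ∀ n : ℕ, N ≤ n → ∀ k : ℕ,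
    (∑ i ∈ Finset.range n, dist (f (x (i + k))) (x (i + k + 1))) / n < δ

/-- `{x_n}` is `ε`-shadowed in average by `y`. -/
def ShadowedInAvg (f : X → X) (ε : ℝ) (x : ℕ → X) (y : X) : Prop :=
  limsup (fun n : ℕ => (∑ i ∈ Finset.range n, dist (f^[i] y) (x i)) / n) atTop < ε

/-- The average shadowing property. -/
def AvgShadowing (f : X → X) : Prop :=
  ∀ ε : ℝ, 0 < ε → ∃ δ : ℝ, 0 < δ ∧
    ∀ x : ℕ → X, AvgPseudoOrbit f δ x → ∃ y : X, ShadowedInAvg f ε x y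

/-- `{x_n}` is an asymptotic average pseudo-orbit of `f`. -/
def AsympAvgPseudoOrbit (f : X → X) (x : ℕ → X) : Prop :=
  Tendsto (fun n : ℕ => (∑ i ∈ Finset.range n, dist (f (x i)) (x (i + 1))) / n)
    atTop (nhds 0)

/-- `{x_n}` is asymptotically shadowed in average by `y`. -/
def AsympShadowedInAvg (f : X → X) (x : ℕ → X) (y : X) : Prop :=
  Tendsto (fun n : ℕ => (∑ i ∈ Finset.range n, dist (f^[i] y) (x i)) / n)
    atTop (nhds 0)

/-- The asymptotic average shadowing property. -/
def AsympAvgShadowing (f : X → X) : Prop :=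
  ∀ x : ℕ → X, AsympAvgPseudoOrbit f x → ∃ y : X, AsympShadowedInAvg f x y

/-- An infinite `δ`-pseudo-orbit. -/
def PseudoOrbit (f : X → X) (δ : ℝ) (x : ℕ → X) : Prop :=
  ∀ i : ℕ, dist (f (x i)) (x (i + 1)) < δ

/-- There exists a finite `δ`-pseudo-orbit of length `n` from `x` to `y`. -/
def FinChain (f : X → X) (δ : ℝ) (n : ℕ) (x y : X) : Prop :=
  ∃ c : ℕ → X, c 0 = x ∧ c n = y ∧ ∀ i < n, dist (f (c i)) (c (i + 1)) < δ

/-- Chain transitivity. -/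
def ChainTransitive (f : X → X) : Prop :=
  ∀ δ : ℝ, 0 < δ → ∀ x y : X, ∃ n : ℕ, 0 < n ∧ FinChain f δ n x y

/-- Chain mixing. -/
def ChainMixing (f : X → X) : Prop :=
  ∀ δ : ℝ, 0 < δ → ∀ x y : X, ∃ N : ℕ, 0 < N ∧ ∀ n : ℕ, N ≤ n → FinChain f δ n x y

/-- The shadowing property. -/
def Shadowing (f : X → X) : Prop :=
  ∀ ε : ℝ, 0 < ε → ∃ δ : ℝ, 0 < δ ∧
    ∀ x : ℕ → X, PseudoOrbit f δ x → ∃ z : X, ∀ i : ℕ, dist (f^[i] z) (x i) < ε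

/-- The limit shadowing property. -/
def LimitShadowing (f : X → X) : Prop :=
  ∀ x : ℕ → X, Tendsto (fun i : ℕ => dist (f (x i)) (x (i + 1))) atTop (nhds 0) →
    ∃ z : X, Tendsto (fun i : ℕ => dist (f^[i] z) (x i)) atTop (nhds 0)

/-- Topological transitivity. -/
def TopTransitive {Y : Type*} [TopologicalSpace Y] (f : Y → Y) : Prop :=
  ∀ U V : Set Y, IsOpen U → IsOpen V → U.Nonempty → V.Nonempty →
    ∃ n : ℕ, 0 < n ∧ (f^[n] '' U ∩ V).Nonempty

/-- Total transitivity. -/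
def TotallyTransitive {Y : Type*} [TopologicalSpace Y] (f : Y → Y) : Prop :=
  ∀ n : ℕ, 1 ≤ n → TopTransitive f^[n]

/-- Topological weak mixing: `f × f` is transitive. -/
def WeaklyMixing {Y : Type*} [TopologicalSpace Y] (f : Y → Y) : Prop :=
  TopTransitive (Prod.map f f)

/-- Topological mixing. -/
def TopMixing {Y : Type*} [TopologicalSpace Y] (f : Y → Y) : Prop :=
  ∀ U V : Set Y, IsOpen U → IsOpen V → U.Nonempty → V.Nonempty →
    ∃ N : ℕ, 0 < N ∧ ∀ n : ℕ, N ≤ n → (f^[n] '' U ∩ V).Nonempty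

/-- The forward orbit of a point. -/
def fOrbit (f : X → X) (x : X) : Set X := Set.range fun n : ℕ => f^[n] x

/-- `x` is a minimal point of `f`: every point of the orbit closure of `x`
has orbit dense in that orbit closure. -/
def MinimalPoint (f : X → X) (x : X) : Prop :=
  ∀ y ∈ closure (fOrbit f x), closure (fOrbit f x) ⊆ closure (fOrbit f y)

variable [MeasurableSpace X]

/-- `μ` is an `f`-invariant Borel probability measure. -/
def InvariantProb (f : X → X) (μ : Measure X) : Prop :=
  IsProbabilityMeasure μ ∧ ∀ B : Set X, MeasurableSet B → μ (f ⁻¹' B) = μ B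

/-- A set is universally null if it has measure zero for every invariant
probability measure. -/
def UnivNull (f : X → X) (U : Set X) : Prop :=
  ∀ μ : Measure X, InvariantProb f μ → μ U = 0

/-- The measure center: complement of the union of all universally null open sets. -/
def measureCenter (f : X → X) : Set X :=
  (⋃ U ∈ {U : Set X | IsOpen U ∧ UnivNull f U}, U)ᶜ

/-- `μ` has full support. -/
def FullSupport (μ : Measure X) : Prop :=
  ∀ U : Set X, IsOpen U → U.Nonempty → 0 < μ U

end Defs

section Visits

variable {X : Type*} [MetricSpace X]

/-- The set of visiting times `N(x,U)`. -/
def visitTimes (f : X → X) (x : X) (U : Set X) : Set ℕ :=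
  {n : ℕ | 0 < n ∧ f^[n] x ∈ U}

/-- `η(n,U) = max_{x ∈ X} #(N(x,U) ∩ {0,…,n-1})`. -/
noncomputable def eta (f : X → X) (U : Set X) (n : ℕ) : ℕ :=
  sSup {k : ℕ | ∃ x : X, k = (visitTimes f x U ∩ Set.Iio n).ncard}

/-- The visit frequency `ξ(U) = inf_{n>0} η(n,U)/n`. -/
noncomputable def xi (f : X → X) (U : Set X) : ℝ :=
  ⨅ n : ℕ, (eta f U (n + 1) : ℝ) / (n + 1)

/-- `J ⊆ ℕ` has asymptotic density `a`. -/
def HasDensity (J : Set ℕ) (a : ℝ) : Prop :=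
  Tendsto (fun n : ℕ => ((J ∩ Set.Iio n).ncard : ℝ) / n) atTop (nhds a)

/-- Upper asymptotic density of a set of naturals. -/
noncomputable def upperDensity (J : Set ℕ) : ℝ :=
  limsup (fun n : ℕ => ((J ∩ Set.Iio n).ncard : ℝ) / n) atTop

end Visits
section Helpers

variable {X : Type*} [MetricSpace X]

private lemma invProb_iterate [MeasurableSpace X] [BorelSpace X]
    {f : X → X} (hf : Continuous f) {μ : MeasureTheory.Measure X} (hμ : InvariantProb f μ)
    {B : Set X} (hB : MeasurableSet B) (i : ℕ) :
    μ (f^[i] ⁻¹' B) = μ B := by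
  induction i with
  | zero => simp
  | succ k ih =>
      have hpre : f^[k+1] ⁻¹' B = f ⁻¹' (f^[k] ⁻¹' B) := by
        rw [Function.iterate_succ]; rfl
      rw [hpre, hμ.2 _ (((hf.iterate k).measurable) hB), ih]

open Classical in
private lemma exists_many_visits [MeasurableSpace X] [BorelSpace X]
    {f : X → X} (hf : Continuous f) {μ : MeasureTheory.Measure X} (hμ : InvariantProb f μ)
    {B : Set X} (hB : MeasurableSet B) (n c : ℕ)
    (hc : (c : ENNReal) < (n : ENNReal) * μ B) :
    ∃ x : X, c < ((Finset.range n).filter (fun i => f^[i] x ∈ B)).card := by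
  classical
  haveI : MeasureTheory.IsProbabilityMeasure μ := hμ.1
  by_contra hcon
  push_neg at hcon
  set F : X → ENNReal := fun x => ∑ i ∈ Finset.range n, (f^[i] ⁻¹' B).indicator 1 x with hF
  have hFx : ∀ x, F x = (((Finset.range n).filter (fun i => f^[i] x ∈ B)).card : ENNReal) := by
    intro x
    rw [hF, Finset.card_filter]
    push_cast
    refine Finset.sum_congr rfl fun i _ => ?_
    by_cases h : f^[i] x ∈ B <;> simp [Set.indicator_apply, h]
  have key : ∫⁻ x, F x ∂μ = (n : ENNReal) * μ B := by
    rw [hF, MeasureTheory.lintegral_finset_sum]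
    · have : ∀ i ∈ Finset.range n,
          ∫⁻ x, (f^[i] ⁻¹' B).indicator 1 x ∂μ = μ B := by
        intro i _
        rw [MeasureTheory.lintegral_indicator_one ((hf.iterate i).measurable hB)]
        exact invProb_iterate hf hμ hB i
      rw [Finset.sum_congr rfl this, Finset.sum_const, Finset.card_range, nsmul_eq_mul]
    · intro i _
      exact measurable_one.indicator ((hf.iterate i).measurable hB)
  have hle : ∫⁻ x, F x ∂μ ≤ (c : ENNReal) := by
    calc ∫⁻ x, F x ∂μ ≤ ∫⁻ _, (c : ENNReal) ∂μ := by
          refine MeasureTheory.lintegral_mono fun x => ?_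
          rw [hFx x]
          exact (Nat.cast_le (α := ENNReal)).mpr (hcon x)
      _ = (c : ENNReal) := by simp
  rw [key] at hle
  exact absurd hc (not_lt.mpr hle)

private lemma fOrbit_self (f : X → X) (x : X) : x ∈ fOrbit f x := ⟨0, rfl⟩

private lemma fOrbit_mapsTo (f : X → X) (x : X) :
    Set.MapsTo f (fOrbit f x) (fOrbit f x) := by
  rintro _ ⟨n, rfl⟩
  exact ⟨n + 1, by simpa using Function.iterate_succ_apply' f n x⟩

private lemma closure_mapsTo {f : X → X} (hf : Continuous f) {S : Set X}
    (hS : Set.MapsTo f S S) : Set.MapsTo f (closure S) (closure S) := by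
  intro x hx
  have : f '' closure S ⊆ closure S := by
    exact (image_closure_subset_closure_image hf).trans
      (closure_mono hS.image_subset)
  exact this ⟨x, hx, rfl⟩

private lemma exists_minimal_subset [CompactSpace X] {f : X → X} (hf : Continuous f)
    {Y : Set X} (hYne : Y.Nonempty) (hYc : IsClosed Y) (hYi : Set.MapsTo f Y Y) :
    ∃ M, M ⊆ Y ∧ M.Nonempty ∧ IsClosed M ∧ Set.MapsTo f M M ∧
      ∀ A, A ⊆ M → A.Nonempty → IsClosed A → Set.MapsTo f A A → A = M := by
  classical
  set S : Set (Set X) := {A | A.Nonempty ∧ IsClosed A ∧ Set.MapsTo f A A} with hS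
  have hzorn := zorn_superset_nonempty S ?_ Y ⟨hYne, hYc, hYi⟩
  · obtain ⟨M, hMY, hMmin⟩ := hzorn
    obtain ⟨hMne, hMc, hMi⟩ := hMmin.prop
    exact ⟨M, hMY, hMne, hMc, hMi, fun A hAM hAne hAc hAi =>
      hMmin.eq_of_subset ⟨hAne, hAc, hAi⟩ hAM⟩
  · intro c hcS hchain hcne
    haveI : Nonempty c := hcne.coe_sort
    have hlb : (⋂ A : c, (A : Set X)).Nonempty := by
      refine IsCompact.nonempty_iInter_of_directed_nonempty_isCompact_isClosed _
        ?_ (fun A => (hcS A.2).1) (fun A => ((hcS A.2).2.1).isCompact)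
        (fun A => (hcS A.2).2.1)
      rintro ⟨A, hA⟩ ⟨B, hB⟩
      rcases hchain.total hA hB with hAB | hBA
      · exact ⟨⟨A, hA⟩, le_refl _, hAB⟩
      · exact ⟨⟨B, hB⟩, hBA, le_refl _⟩
    refine ⟨⋂ A : c, (A : Set X), ⟨hlb, isClosed_iInter fun A => (hcS A.2).2.1, ?_⟩,
      fun A hA => Set.iInter_subset_of_subset ⟨A, hA⟩ subset_rfl⟩
    intro x hx
    simp only [Set.mem_iInter] at hx ⊢
    exact fun A => (hcS A.2).2.2 (hx A)

end Helpers


/-- A compact system with almost specification and a fully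
supported invariant measure has a dense set of minimal points. -/
theorem almostSpec_fullMeasure_dense_minimal
    {X : Type*} [MetricSpace X] [CompactSpace X] [MeasurableSpace X] [BorelSpace X]
    (f : X → X) (hf : Continuous f)
    (μ : Measure X) (hμ : InvariantProb f μ) (hfull : FullSupport μ)
    (h : AlmostSpec f) : Dense {x : X | MinimalPoint f x} := by

  classical
  obtain ⟨g, ε₀, kg, hmis, hspec⟩ := h
  rw [Metric.dense_iff]
  intro p r hr
  set ε : ℝ := min (r / 3) ε₀ with hεdef
  have hε0 : 0 < ε := lt_min (by linarith) hmis.pos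
  have hεε₀ : ε ≤ ε₀ := min_le_right _ _
  set K : Set X := Metric.closedBall p (2 * ε) with hKdef
  have hKU : K ⊆ Metric.ball p r := by
    apply Metric.closedBall_subset_ball
    have : ε ≤ r / 3 := min_le_left _ _
    linarith
  set B : Set X := Metric.ball p ε with hBdef
  have hBpos : 0 < μ B := hfull B Metric.isOpen_ball ⟨p, Metric.mem_ball_self hε0⟩
  haveI : MeasureTheory.IsProbabilityMeasure μ := hμ.1
  have hBne : μ B ≠ ⊤ := MeasureTheory.measure_ne_top μ B
  set γ : ℝ := (μ B).toReal with hγdef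
  have hγ0 : 0 < γ := ENNReal.toReal_pos (ne_of_gt hBpos) hBne
  -- choose the block length n
  have hev : ∀ᶠ n : ℕ in atTop, (g n ε : ℝ) / n < γ :=
    (hmis.small ε hε0 hεε₀).eventually_lt_const hγ0
  obtain ⟨n, hn1, hnkg, hnγ⟩ : ∃ n : ℕ, 1 ≤ n ∧ kg ε ≤ n ∧ (g n ε : ℝ) / n < γ := by
    obtain ⟨n, hn⟩ := (hev.and (eventually_ge_atTop (max 1 (kg ε)))).exists
    exact ⟨n, le_trans (le_max_left _ _) hn.2, le_trans (le_max_right _ _) hn.2, hn.1⟩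
  have hnpos : (0:ℝ) < n := by exact_mod_cast hn1
  have hgγn : (g n ε : ℝ) < γ * n := by
    rw [div_lt_iff₀ hnpos] at hnγ; linarith
  have hγ1 : γ ≤ 1 := by
    rw [hγdef]
    calc (μ B).toReal ≤ (μ Set.univ).toReal :=
          ENNReal.toReal_mono (by simp) (MeasureTheory.measure_mono (Set.subset_univ B))
      _ = 1 := by simp
  have hgn : g n ε < n := by
    have h1 : (g n ε : ℝ) < n := lt_of_lt_of_le hgγn (by nlinarith)
    exact_mod_cast h1
  -- pigeonhole: a point with more than g n ε visits to B in time n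
  have hlt : ((g n ε : ℕ) : ENNReal) < (n : ENNReal) * μ B := by
    have h1 : μ B = ENNReal.ofReal γ := (ENNReal.ofReal_toReal hBne).symm
    have h2 : (n : ENNReal) * μ B = ENNReal.ofReal (γ * n) := by
      rw [h1, ENNReal.ofReal_mul (le_of_lt hγ0), mul_comm, ENNReal.ofReal_natCast]
    rw [h2, ← ENNReal.ofReal_natCast (g n ε)]
    exact (ENNReal.ofReal_lt_ofReal_iff (by positivity)).mpr hgγn
  have hBmeas : MeasurableSet B := by rw [hBdef]; exact Metric.isOpen_ball.measurableSet
  obtain ⟨x, hx⟩ := exists_many_visits hf hμ hBmeas n (g n ε) hlt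
  set V : Finset ℕ := (Finset.range n).filter (fun i => f^[i] x ∈ B) with hVdef
  -- extracting a visit of the shadowing point in each window
  have hsegment : ∀ (z : X) (j : ℕ), f^[j * n] z ∈ mistakeBowenBall f g n x ε →
      ∃ i ∈ Finset.range n, f^[j * n + i] z ∈ K := by
    intro z j hz
    obtain ⟨Λ, hΛ, hmem⟩ := Set.mem_iUnion₂.mp hz
    obtain ⟨hΛsub, hΛcard⟩ := hΛ
    have hmem' : ∀ i ∈ Λ, dist (f^[i] x) (f^[i] (f^[j * n] z)) < ε := hmem
    have hcard : 1 ≤ (V ∩ Λ).card := by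
      have h1 : (V ∪ Λ).card + (V ∩ Λ).card = V.card + Λ.card :=
        Finset.card_union_add_card_inter V Λ
      have h2 : (V ∪ Λ).card ≤ n := by
        have hVsub : V ⊆ Finset.range n := by
          rw [hVdef]; exact Finset.filter_subset _ _
        have := Finset.card_le_card (Finset.union_subset hVsub hΛsub)
        simpa using this
      omega
    obtain ⟨i, hi⟩ := Finset.card_pos.mp hcard
    rw [Finset.mem_inter] at hi
    obtain ⟨hiV, hiΛ⟩ := hi
    rw [hVdef, Finset.mem_filter] at hiV
    refine ⟨i, hiV.1, ?_⟩
    have heq : f^[j * n + i] z = f^[i] (f^[j * n] z) := by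
      rw [Nat.add_comm, Function.iterate_add_apply]
    rw [hKdef, Metric.mem_closedBall, heq]
    have hd1 : dist (f^[i] x) (f^[i] (f^[j * n] z)) < ε := hmem' i hiΛ
    have hd2 : dist (f^[i] x) p < ε := hiV.2
    calc dist (f^[i] (f^[j * n] z)) p
        ≤ dist (f^[i] (f^[j * n] z)) (f^[i] x) + dist (f^[i] x) p := dist_triangle _ _ _
      _ ≤ 2 * ε := by rw [dist_comm]; linarith
  -- nested closed sets from almost specification with more and more blocks
  set D : ℕ → Set X := fun j => ⋃ i ∈ Finset.range n, f^[j * n + i] ⁻¹' K with hDdef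
  have hDclosed : ∀ j, IsClosed (D j) := by
    intro j
    refine Set.Finite.isClosed_biUnion (Finset.finite_toSet _) fun i _ => ?_
    exact IsClosed.preimage (hf.iterate _) Metric.isClosed_closedBall
  set C : ℕ → Set X := fun m => ⋂ j ∈ Finset.range (m + 1), D j with hCdef
  have hCclosed : ∀ m, IsClosed (C m) :=
    fun m => isClosed_biInter fun j _ => hDclosed j
  have hCne : ∀ m, (C m).Nonempty := by
    intro m
    obtain ⟨z, hz⟩ := hspec (m + 1) (by omega) (fun _ => ε) (fun _ => x) (fun _ => n)
      (fun j _ _ => hε0) (fun j _ _ => hnkg)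
    refine ⟨z, Set.mem_iInter₂.mpr fun j hj => ?_⟩
    rw [Finset.mem_range] at hj
    have hz' := hz (j + 1) (by omega) (by omega)
    have hsum : (∑ s ∈ Finset.Ico 1 (j + 1), n) = j * n := by
      rw [Finset.sum_const, Nat.card_Ico]
      simp [Nat.mul_comm]
    rw [hsum] at hz'
    obtain ⟨i, hi, hiK⟩ := hsegment z j hz'
    exact Set.mem_iUnion₂.mpr ⟨i, hi, hiK⟩
  have hCanti : ∀ m, C (m + 1) ⊆ C m := by
    intro m z hz
    refine Set.mem_iInter₂.mpr fun j hj => ?_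
    exact Set.mem_iInter₂.mp hz j (by simp only [Finset.mem_range] at hj ⊢; omega)
  obtain ⟨z, hz⟩ := IsCompact.nonempty_iInter_of_sequence_nonempty_isCompact_isClosed
    C hCanti hCne ((hCclosed 0).isCompact) hCclosed
  have hvisit : ∀ j : ℕ, ∃ i ∈ Finset.range n, f^[j * n + i] z ∈ K := by
    intro j
    have h1 : z ∈ C j := Set.mem_iInter.mp hz j
    have h2 : z ∈ D j := Set.mem_iInter₂.mp h1 j (by simp)
    obtain ⟨i, hi, hiK⟩ := Set.mem_iUnion₂.mp h2
    exact ⟨i, hi, hiK⟩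
  -- the whole orbit closure visits K within every 2n steps
  set DD : Set X := ⋃ t ∈ Finset.range (2 * n), f^[t] ⁻¹' K with hDDdef
  have hDDclosed : IsClosed DD := by
    refine Set.Finite.isClosed_biUnion (Finset.finite_toSet _) fun t _ => ?_
    exact IsClosed.preimage (hf.iterate _) Metric.isClosed_closedBall
  have horb : fOrbit f z ⊆ DD := by
    rintro _ ⟨s, rfl⟩
    have hn0 : 0 < n := hn1
    obtain ⟨i, hi, hiK⟩ := hvisit (s / n + 1)
    rw [Finset.mem_range] at hi
    have hdm : s / n * n + s % n = s := Nat.div_add_mod' s n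
    have hmod := Nat.mod_lt s hn0
    have hmul : (s / n + 1) * n = s / n * n + n := by ring
    have hij : (s / n + 1) * n + i = (n + i - s % n) + s := by omega
    have hmem : f^[n + i - s % n] (f^[s] z) ∈ K := by
      rw [← Function.iterate_add_apply, ← hij]
      exact hiK
    refine Set.mem_iUnion₂.mpr ⟨n + i - s % n, ?_, hmem⟩
    rw [Finset.mem_range]
    omega
  -- pick a minimal subset of the orbit closure
  set Y : Set X := closure (fOrbit f z) with hYdef
  have hYD : Y ⊆ DD := closure_minimal horb hDDclosed
  obtain ⟨M, hMY, hMne, hMc, hMi, hMmin⟩ := exists_minimal_subset hf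
    ⟨z, subset_closure (fOrbit_self f z)⟩ isClosed_closure
    (closure_mapsTo hf (fOrbit_mapsTo f z))
  obtain ⟨y, hy⟩ := hMne
  obtain ⟨t, ht, htK⟩ := Set.mem_iUnion₂.mp (hYD (hMY hy))
  refine ⟨f^[t] y, hKU htK, ?_⟩
  have hwM : f^[t] y ∈ M := (hMi.iterate t) hy
  have horbM : ∀ v ∈ M, closure (fOrbit f v) = M := by
    intro v hv
    refine hMmin _ ?_ ⟨v, subset_closure (fOrbit_self f v)⟩ isClosed_closure
      (closure_mapsTo hf (fOrbit_mapsTo f v))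
    refine closure_minimal ?_ hMc
    rintro _ ⟨k, rfl⟩
    exact (hMi.iterate k) hv
  intro v hv
  rw [horbM _ hwM] at hv ⊢
  rw [horbM v hv]
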